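/- For every 2/3 < γ < 1 there exists a constant C (depending only on γ) such that for all positive integers r and nonnegative integers m, Σ_{x,y,z > m, x+y+z = r} (xyz)^{-γ} ≤ C (r+m)^{2−3γ}. -/

import Mathlib

open Finset

lemma aux_sum_rpow (γ : ℝ) (h0 : 0 < γ) (h1 : γ < 1) (n : ℕ) :
    ∑ t ∈ Finset.Ico 1 n, (t : ℝ) ^ (-γ) ≤ (1 + 1 / (1 - γ)) * (n : ℝ) ^ (1 - γ) := by
  have h1γ : 0 < 1 - γ := by linarith
  rcases le_or_gt n 1 with hn | hn
  · rw [Finset.Ico_eq_empty (by omega), Finset.sum_empty]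
    positivity
  · have hone : (1:ℝ) ≤ (n : ℝ) ^ (1 - γ) := by
      calc (1:ℝ) = 1 ^ (1 - γ) := (Real.one_rpow _).symm
      _ ≤ (n : ℝ) ^ (1 - γ) := Real.rpow_le_rpow zero_le_one (by exact_mod_cast hn.le) h1γ.le
    rw [Finset.sum_eq_sum_Ico_succ_bot hn]
    have hshift : ∑ t ∈ Finset.Ico 2 n, (t : ℝ) ^ (-γ)
        = ∑ i ∈ Finset.Ico 1 (n-1), ((i + 1 : ℕ) : ℝ) ^ (-γ) := by
      rw [Finset.sum_Ico_eq_sum_range, Finset.sum_Ico_eq_sum_range]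
      refine Finset.sum_congr rfl (fun i _ => ?_)
      congr 1
      push_cast; ring
    have hint := AntitoneOn.sum_le_integral_Ico (f := fun x : ℝ => x ^ (-γ))
      (a := 1) (b := n - 1) (by omega) ?_
    · have hval : ∫ x in (1:ℝ)..((n-1:ℕ):ℝ), x ^ (-γ)
          = (((n-1:ℕ):ℝ) ^ (-γ+1) - 1 ^ (-γ+1)) / (-γ+1) := by
        rw [integral_rpow (Or.inl (by linarith))]
      have hsum2 : ∑ k ∈ Finset.Ico 2 n, (k:ℝ)^(-γ) ≤ (n:ℝ)^(1-γ)/(1-γ) := by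
        rw [hshift]
        refine hint.trans ?_
        simp only [Nat.cast_one]
        rw [hval, Real.one_rpow]
        have he : -γ+1 = 1-γ := by ring
        rw [he]
        have hnn : ((n-1:ℕ):ℝ) ^ (1-γ) ≤ (n:ℝ) ^ (1-γ) :=
          Real.rpow_le_rpow (by positivity) (by exact_mod_cast Nat.sub_le n 1) h1γ.le
        gcongr
        linarith
      have h1 : ((1:ℕ):ℝ) ^ (-γ) = 1 := by rw [Nat.cast_one, Real.one_rpow]
      rw [h1]
      have : (1 + 1/(1-γ)) * (n:ℝ)^(1-γ) = (n:ℝ)^(1-γ) + (n:ℝ)^(1-γ)/(1-γ) := by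
        field_simp
      rw [this]
      have := hsum2
      linarith
    · intro x hx y hy hxy
      exact Real.rpow_le_rpow_of_nonpos (lt_of_lt_of_le one_pos (by exact_mod_cast hx.1)) hxy (by linarith)

set_option maxHeartbeats 2000000 in
theorem stmt_16 (γ : ℝ) (hγ₁ : 2 / 3 < γ) (hγ₂ : γ < 1) :
    ∃ C : ℝ, 0 < C ∧ ∀ r m : ℕ, 0 < r →
      ∑ q ∈ (Finset.Ico (m + 1) r ×ˢ Finset.Ico (m + 1) r).filter
          (fun q => m + q.1 + q.2 < r),
        (q.1 : ℝ) ^ (-γ) * (q.2 : ℝ) ^ (-γ) * ((r - q.1 - q.2 : ℕ) : ℝ) ^ (-γ)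
        ≤ C * ((r + m : ℕ) : ℝ) ^ (2 - 3 * γ) := by
  have h0γ : 0 < γ := by linarith
  have h1γ : 0 < 1 - γ := by linarith
  set K : ℝ := 1 + 1 / (1 - γ) with hK
  have hKpos : 0 < K := by rw [hK]; positivity
  refine ⟨(2:ℝ) ^ (3 * γ - 2) * 3 ^ γ * 3 * K ^ 2, by positivity, ?_⟩
  intro r m hr
  set S := (Finset.Ico (m + 1) r ×ˢ Finset.Ico (m + 1) r).filter
      (fun q => m + q.1 + q.2 < r) with hS
  have hrpos : (0:ℝ) < r := by exact_mod_cast hr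
  rcases S.eq_empty_or_nonempty with hSe | hSne
  · rw [hSe, Finset.sum_empty]
    positivity
  have hmem : ∀ q ∈ S, m + 1 ≤ q.1 ∧ q.1 < r ∧ m + 1 ≤ q.2 ∧ q.2 < r ∧
      m + q.1 + q.2 < r := by
    intro q hq
    rw [hS, Finset.mem_filter, Finset.mem_product, Finset.mem_Ico, Finset.mem_Ico] at hq
    omega
  -- r + m < 2 r
  have hm : m < r := by
    obtain ⟨q, hq⟩ := hSne
    have := hmem q hq
    omega
  have hrm : ((r + m : ℕ) : ℝ) ≤ 2 * r := by
    push_cast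
    have : (m:ℝ) ≤ r := by exact_mod_cast hm.le
    linarith
  set A : ℕ → ℝ := fun t => (t:ℝ) ^ (-γ) with hA
  have hApos : ∀ t : ℕ, 0 ≤ A t := fun t => Real.rpow_nonneg (Nat.cast_nonneg t) _
  set T : ℝ := ∑ t ∈ Finset.Ico 1 r, A t with hT
  have hTnn : 0 ≤ T := Finset.sum_nonneg fun t _ => hApos t
  have hTle : T ≤ K * (r:ℝ) ^ (1 - γ) := aux_sum_rpow γ h0γ hγ₂ r
  have hP : (0:ℝ) < (r:ℝ)/3 := by linarith
  -- pointwise bound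
  have hpt : ∀ q ∈ S, A q.1 * A q.2 * A (r - q.1 - q.2) ≤
      ((r:ℝ)/3) ^ (-γ) * (A q.1 * A q.2 + A q.2 * A (r - q.1 - q.2)
        + A q.1 * A (r - q.1 - q.2)) := by
    intro q hq
    obtain ⟨h1, h2, h3, h4, h5⟩ := hmem q hq
    set z : ℕ := r - q.1 - q.2 with hz
    have hsum3 : q.1 + q.2 + z = r := by omega
    have hbig : r ≤ 3 * q.1 ∨ r ≤ 3 * q.2 ∨ r ≤ 3 * z := by omega
    have hPle : ∀ t : ℕ, r ≤ 3 * t → A t ≤ ((r:ℝ)/3) ^ (-γ) := by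
      intro t ht
      refine Real.rpow_le_rpow_of_nonpos hP ?_ (by linarith)
      have h3t : (r:ℝ) ≤ 3 * t := by exact_mod_cast ht
      rw [div_le_iff₀ (by norm_num)]
      linarith
    have hq1 : 0 ≤ A q.1 := hApos _
    have hq2 : 0 ≤ A q.2 := hApos _
    have hq3 : 0 ≤ A z := hApos _
    have hPnn : (0:ℝ) ≤ ((r:ℝ)/3) ^ (-γ) := Real.rpow_nonneg hP.le _
    rcases hbig with h | h | h
    · have := hPle _ h
      nlinarith [mul_nonneg hq2 hq3, mul_nonneg hq1 hq2, mul_nonneg hq1 hq3,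
        mul_nonneg hPnn (mul_nonneg hq2 hq3), mul_nonneg hPnn (mul_nonneg hq1 hq3)]
    · have := hPle _ h
      nlinarith [mul_nonneg hq2 hq3, mul_nonneg hq1 hq2, mul_nonneg hq1 hq3,
        mul_nonneg hPnn (mul_nonneg hq2 hq3), mul_nonneg hPnn (mul_nonneg hq1 hq3)]
    · have := hPle _ h
      nlinarith [mul_nonneg hq2 hq3, mul_nonneg hq1 hq2, mul_nonneg hq1 hq3,
        mul_nonneg hPnn (mul_nonneg hq2 hq3), mul_nonneg hPnn (mul_nonneg hq1 hq3)]
  have hPnn' : (0:ℝ) ≤ ((r:ℝ)/3) ^ (-γ) := Real.rpow_nonneg hP.le _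
  have hsub : S ⊆ Finset.Ico 1 r ×ˢ Finset.Ico 1 r := by
    intro q hq
    have := hmem q hq
    simp only [Finset.mem_product, Finset.mem_Ico]
    omega
  have hTT : ∑ p ∈ Finset.Ico 1 r ×ˢ Finset.Ico 1 r, A p.1 * A p.2 = T * T := by
    rw [Finset.sum_product, hT]
    exact (Finset.sum_mul_sum _ _ _ _).symm
  have hbound1 : ∑ q ∈ S, A q.1 * A q.2 ≤ T * T := by
    rw [← hTT]
    exact Finset.sum_le_sum_of_subset_of_nonneg hsub
      (fun p _ _ => mul_nonneg (hApos _) (hApos _))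
  have key : ∀ g : ℕ × ℕ → ℕ × ℕ,
      (∀ q ∈ S, g q ∈ Finset.Ico 1 r ×ˢ Finset.Ico 1 r) →
      (∀ q ∈ S, ∀ q' ∈ S, g q = g q' → q = q') →
      ∑ q ∈ S, A (g q).1 * A (g q).2 ≤ T * T := by
    intro g hgm hgi
    calc ∑ q ∈ S, A (g q).1 * A (g q).2
        = ∑ p ∈ S.image g, A p.1 * A p.2 := (Finset.sum_image (f := fun p : ℕ × ℕ => A p.1 * A p.2) hgi).symm
      _ ≤ ∑ p ∈ Finset.Ico 1 r ×ˢ Finset.Ico 1 r, A p.1 * A p.2 :=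
          Finset.sum_le_sum_of_subset_of_nonneg (Finset.image_subset_iff.2 hgm)
            (fun p _ _ => mul_nonneg (hApos _) (hApos _))
      _ = T * T := hTT
  have hbound2 : ∑ q ∈ S, A q.2 * A (r - q.1 - q.2) ≤ T * T := by
    refine key (fun q => (q.2, r - q.1 - q.2)) ?_ ?_
    · intro q hq
      have := hmem q hq
      simp only [Finset.mem_product, Finset.mem_Ico]
      omega
    · intro q hq q' hq' h
      simp only [Prod.mk.injEq] at h
      obtain ⟨e1, e2⟩ := h
      have m1 := hmem q hq
      have m2 := hmem q' hq'
      exact Prod.ext (by omega) (by omega)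
  have hbound3 : ∑ q ∈ S, A q.1 * A (r - q.1 - q.2) ≤ T * T := by
    refine key (fun q => (q.1, r - q.1 - q.2)) ?_ ?_
    · intro q hq
      have := hmem q hq
      simp only [Finset.mem_product, Finset.mem_Ico]
      omega
    · intro q hq q' hq' h
      simp only [Prod.mk.injEq] at h
      obtain ⟨e1, e2⟩ := h
      have m1 := hmem q hq
      have m2 := hmem q' hq'
      exact Prod.ext (by omega) (by omega)
  -- arithmetic on rpow
  have hPer : ((r:ℝ)/3) ^ (-γ) = 3 ^ γ * (r:ℝ) ^ (-γ) := by
    rw [Real.div_rpow hrpos.le (by norm_num : (0:ℝ) ≤ 3),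
      Real.rpow_neg (by norm_num : (0:ℝ) ≤ 3)]
    have h3 : (3:ℝ) ^ γ ≠ 0 := ne_of_gt (Real.rpow_pos_of_pos (by norm_num) _)
    field_simp
  have hT2 : T * T ≤ K ^ 2 * ((r:ℝ) ^ (1 - γ)) ^ 2 := by
    have := mul_le_mul hTle hTle hTnn (by positivity)
    calc T * T ≤ K * (r:ℝ) ^ (1-γ) * (K * (r:ℝ) ^ (1-γ)) := this
      _ = K ^ 2 * ((r:ℝ) ^ (1 - γ)) ^ 2 := by ring
  have hrr : (r:ℝ) ^ (-γ) * ((r:ℝ) ^ (1 - γ)) ^ 2 = (r:ℝ) ^ (2 - 3 * γ) := by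
    rw [pow_two, ← Real.rpow_add hrpos, ← Real.rpow_add hrpos]
    congr 1
    ring
  have hfin : (r:ℝ) ^ (2 - 3*γ) ≤ 2 ^ (3*γ - 2) * ((r + m : ℕ):ℝ) ^ (2 - 3*γ) := by
    have h1 : (2 * (r:ℝ)) ^ (2-3*γ) ≤ ((r+m:ℕ):ℝ) ^ (2-3*γ) :=
      Real.rpow_le_rpow_of_nonpos (by positivity) hrm (by linarith)
    have h2 : (2 * (r:ℝ)) ^ (2-3*γ) = 2 ^ (2-3*γ) * (r:ℝ) ^ (2-3*γ) :=
      Real.mul_rpow (by norm_num) hrpos.le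
    have h3 : (2:ℝ) ^ (3*γ-2) * 2 ^ (2-3*γ) = 1 := by
      rw [← Real.rpow_add (by norm_num : (0:ℝ) < 2)]
      norm_num
    have h2nn : (0:ℝ) ≤ 2 ^ (3*γ-2) := (Real.rpow_pos_of_pos two_pos _).le
    calc (r:ℝ) ^ (2-3*γ) = 2 ^ (3*γ-2) * (2 ^ (2-3*γ) * (r:ℝ) ^ (2-3*γ)) := by
          rw [← mul_assoc, h3, one_mul]
      _ ≤ 2 ^ (3*γ-2) * ((r+m:ℕ):ℝ) ^ (2-3*γ) := by
          rw [← h2]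
          exact mul_le_mul_of_nonneg_left h1 h2nn
  calc ∑ q ∈ S, A q.1 * A q.2 * A (r - q.1 - q.2)
      ≤ ∑ q ∈ S, ((r:ℝ)/3) ^ (-γ) * (A q.1 * A q.2 + A q.2 * A (r - q.1 - q.2)
          + A q.1 * A (r - q.1 - q.2)) := Finset.sum_le_sum hpt
    _ = ((r:ℝ)/3) ^ (-γ) * (∑ q ∈ S, A q.1 * A q.2
          + ∑ q ∈ S, A q.2 * A (r - q.1 - q.2)
          + ∑ q ∈ S, A q.1 * A (r - q.1 - q.2)) := by
        rw [← Finset.mul_sum, Finset.sum_add_distrib, Finset.sum_add_distrib]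
    _ ≤ ((r:ℝ)/3) ^ (-γ) * (T*T + T*T + T*T) := by
        refine mul_le_mul_of_nonneg_left ?_ hPnn'
        linarith [hbound1, hbound2, hbound3]
    _ = 3 ^ γ * 3 * ((r:ℝ) ^ (-γ) * (T * T)) := by rw [hPer]; ring
    _ ≤ 3 ^ γ * 3 * ((r:ℝ) ^ (-γ) * (K ^ 2 * ((r:ℝ) ^ (1-γ)) ^ 2)) := by
        have hrn : 0 ≤ (r:ℝ) ^ (-γ) := Real.rpow_nonneg hrpos.le _
        exact mul_le_mul_of_nonneg_left (mul_le_mul_of_nonneg_left hT2 hrn)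
          (by positivity)
    _ = 3 ^ γ * 3 * K ^ 2 * (r:ℝ) ^ (2 - 3*γ) := by rw [← hrr]; ring
    _ ≤ 3 ^ γ * 3 * K ^ 2 * (2 ^ (3*γ-2) * ((r+m:ℕ):ℝ) ^ (2-3*γ)) :=
        mul_le_mul_of_nonneg_left hfin (by positivity)
    _ = 2 ^ (3*γ - 2) * 3 ^ γ * 3 * K ^ 2 * ((r+m:ℕ):ℝ) ^ (2 - 3*γ) := by ring
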